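/- For the two-phase game value function V(t) (expected total reward under the human threshold strategy t with robot best response), V(5/92) > V(0); that is, a human who sometimes sacrifices immediate reward to signal an intermediate θ achieves strictly higher total expected reward than the greedy expert demonstrator. -/

import Mathlib

open MeasureTheory intervalIntegral

/-- Human's phase-1 reward under the threshold-`t` strategy over actions
`{(0,2),(1,1),(2,0)}` with reward `θp + (1−θ)q`. -/
noncomputable def rH (θ t : ℝ) : ℝ :=
  if θ < 1/2 - t then 2 * (1 - θ) else if θ ≤ 1/2 + t then 1 else 2 * θ

/-- Robot's phase-2 reward: the action from `{(0,90),(50,50),(90,0)}` optimal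
for the posterior mean given the human's signal (for `t < 1/9`: `(0,90)`,
`(50,50)`, `(90,0)` on the low/middle/high signals). -/
noncomputable def rR (θ t : ℝ) : ℝ :=
  if θ < 1/2 - t then 90 * (1 - θ) else if θ ≤ 1/2 + t then 50 else 90 * θ

/-- Total expected value `V(t) = ∫₀¹ [r_H(θ,t) + r_R(θ,t)] dθ`. -/
noncomputable def V (t : ℝ) : ℝ := ∫ θ in (0:ℝ)..1, (rH θ t + rR θ t)

lemma ae_ne (c : ℝ) : ∀ᵐ x : ℝ, x ≠ c := by
  rw [ae_iff]
  simpa using measure_singleton (α := ℝ) c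

lemma Vval {t : ℝ} (h0 : 0 ≤ t) (h1 : t ≤ 1/4) : V t = 69 + 10*t - 92*t^2 := by
  have ha : (0:ℝ) ≤ 1/2 - t := by linarith
  have hab : (1/2 - t : ℝ) ≤ 1/2 + t := by linarith
  have hb1 : (1/2 + t : ℝ) ≤ 1 := by linarith
  have e1 : ∫ θ in (0:ℝ)..(1/2 - t), (rH θ t + rR θ t)
      = ∫ θ in (0:ℝ)..(1/2 - t), (92 - 92*θ) := by
    apply intervalIntegral.integral_congr_ae
    filter_upwards [ae_ne (1/2 - t)] with x hx hmem
    rw [Set.uIoc_of_le ha] at hmem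
    have : x < 1/2 - t := lt_of_le_of_ne hmem.2 hx
    simp only [rH, rR, if_pos this]
    ring
  have e2 : ∫ θ in (1/2 - t : ℝ)..(1/2 + t), (rH θ t + rR θ t)
      = ∫ θ in (1/2 - t : ℝ)..(1/2 + t), (51:ℝ) := by
    apply integral_congr
    intro x hmem
    rw [Set.uIcc_of_le hab] at hmem
    simp only [rH, rR, if_neg (not_lt.2 hmem.1), if_pos hmem.2]
    norm_num
  have e3 : ∫ θ in (1/2 + t : ℝ)..1, (rH θ t + rR θ t)
      = ∫ θ in (1/2 + t : ℝ)..1, (92*θ) := by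
    apply intervalIntegral.integral_congr_ae
    filter_upwards with x hmem
    rw [Set.uIoc_of_le hb1] at hmem
    have h2 : ¬ x ≤ 1/2 + t := not_le.2 hmem.1
    have h1' : ¬ x < 1/2 - t := by push_neg; linarith [hmem.1]
    simp only [rH, rR, if_neg h1', if_neg h2]
    ring
  have i1 : IntervalIntegrable (fun θ => rH θ t + rR θ t) volume 0 (1/2 - t) := by
    apply IntervalIntegrable.congr_ae (f := fun θ => 92 - 92*θ)
    · exact ((continuous_const.sub (continuous_const.mul continuous_id)).intervalIntegrable _ _)
    · rw [Filter.EventuallyEq, ae_restrict_iff' measurableSet_uIoc]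
      filter_upwards [ae_ne (1/2 - t)] with x hx hmem
      rw [Set.uIoc_of_le ha] at hmem
      have : x < 1/2 - t := lt_of_le_of_ne hmem.2 hx
      simp only [rH, rR, if_pos this]; ring
  have i2 : IntervalIntegrable (fun θ => rH θ t + rR θ t) volume (1/2 - t) (1/2 + t) := by
    apply IntervalIntegrable.congr_ae (f := fun _ => (51:ℝ))
    · exact intervalIntegrable_const
    · rw [Filter.EventuallyEq, ae_restrict_iff' measurableSet_uIoc]
      filter_upwards with x hmem
      rw [Set.uIoc_of_le hab] at hmem
      simp only [rH, rR, if_neg (not_lt.2 hmem.1.le), if_pos hmem.2]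
      norm_num
  have i3 : IntervalIntegrable (fun θ => rH θ t + rR θ t) volume (1/2 + t) 1 := by
    apply IntervalIntegrable.congr_ae (f := fun θ => 92*θ)
    · exact ((continuous_const.mul continuous_id).intervalIntegrable _ _)
    · rw [Filter.EventuallyEq, ae_restrict_iff' measurableSet_uIoc]
      filter_upwards with x hmem
      rw [Set.uIoc_of_le hb1] at hmem
      have h2 : ¬ x ≤ 1/2 + t := not_le.2 hmem.1
      have h1' : ¬ x < 1/2 - t := by push_neg; linarith [hmem.1]
      simp only [rH, rR, if_neg h1', if_neg h2]; ring
  have split : V t = (∫ θ in (0:ℝ)..(1/2 - t), (rH θ t + rR θ t))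
      + (∫ θ in (1/2 - t : ℝ)..(1/2 + t), (rH θ t + rR θ t))
      + (∫ θ in (1/2 + t : ℝ)..1, (rH θ t + rR θ t)) := by
    rw [V, ← integral_add_adjacent_intervals i1 (i2.trans i3),
      ← integral_add_adjacent_intervals i2 i3, add_assoc]
  have c1 : (∫ θ in (0:ℝ)..(1/2-t), (92 - 92*θ))
      = (∫ θ in (0:ℝ)..(1/2-t), (92:ℝ)) - ∫ θ in (0:ℝ)..(1/2-t), 92*θ :=
    intervalIntegral.integral_sub intervalIntegrable_const
      (by apply Continuous.intervalIntegrable; continuity)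
  rw [split, e1, e2, e3, c1, intervalIntegral.integral_const_mul, integral_id,
    intervalIntegral.integral_const, intervalIntegral.integral_const,
    intervalIntegral.integral_const_mul, integral_id]
  simp only [smul_eq_mul]
  ring


/-- `V(5/92) > V(0)`: a human who sometimes sacrifices immediate reward to
signal an intermediate `θ` achieves strictly higher total expected reward than
the greedy expert demonstrator. -/
theorem deviation_beats_expert : V 0 < V (5/92) := by
  rw [Vval le_rfl (by norm_num), Vval (by norm_num) (by norm_num)]
  norm_num
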